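/- Let X be a finite set with |X| ≥ 2 and let C be a hierarchy on X. Then the following are equivalent: (a) C is a maximal hierarchy on X; (b) X ∈ C and every cluster C ∈ C with |C| > 1 is the union of two proper sub-clusters C₁, C₂ ∈ C (which are then necessarily disjoint); (c) X ∈ C, C is ample, and {x} ∈ C for every x ∈ X. -/

import Mathlib

/-- Two subsets `A`, `B` are compatible if `A ∩ B ∈ {∅, A, B}`. -/
def Compatible {α : Type*} [DecidableEq α] (A B : Finset α) : Prop :=
  A ∩ B = ∅ ∨ A ∩ B = A ∨ A ∩ B = B

/-- A cluster system: a collection of non-empty subsets of `X`. -/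
def IsCS {α : Type*} [DecidableEq α] (C : Set (Finset α)) : Prop :=
  ∀ A ∈ C, A.Nonempty

/-- The adjoint `C*`: all non-empty subsets of `X` compatible with every member of `C`. -/
def adjS {α : Type*} [DecidableEq α] (C : Set (Finset α)) : Set (Finset α) :=
  {A | A.Nonempty ∧ ∀ B ∈ C, Compatible A B}

/-- A hierarchy: a cluster system whose members are pairwise compatible. -/
def IsHierarchyS {α : Type*} [DecidableEq α] (C : Set (Finset α)) : Prop :=
  IsCS C ∧ ∀ A ∈ C, ∀ B ∈ C, Compatible A B

/-- A maximal hierarchy: a hierarchy not properly contained in any other hierarchy. -/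
def IsMaxHierarchyS {α : Type*} [DecidableEq α] (H : Set (Finset α)) : Prop :=
  IsHierarchyS H ∧ ∀ D : Set (Finset α), IsHierarchyS D → H ⊆ D → D = H

/-- A weak patchwork: incompatible members have their union in the system. -/
def IsWeakPW {α : Type*} [DecidableEq α] (C : Set (Finset α)) : Prop :=
  ∀ A ∈ C, ∀ B ∈ C, ¬Compatible A B → A ∪ B ∈ C

/-- A patchwork: incompatible members have both intersection and union in the system. -/
def IsPW {α : Type*} [DecidableEq α] (C : Set (Finset α)) : Prop :=
  ∀ A ∈ C, ∀ B ∈ C, ¬Compatible A B → A ∩ B ∈ C ∧ A ∪ B ∈ C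

/-- A saturated patchwork: for incompatible members `A`, `B`, the five sets
`A ∩ B`, `A ∪ B`, `A - B`, `B - A`, `(A ∪ B) - (A ∩ B)` lie in the system. -/
def IsSatPW {α : Type*} [DecidableEq α] (C : Set (Finset α)) : Prop :=
  ∀ A ∈ C, ∀ B ∈ C, ¬Compatible A B →
    A ∩ B ∈ C ∧ A ∪ B ∈ C ∧ A \ B ∈ C ∧ B \ A ∈ C ∧ (A ∪ B) \ (A ∩ B) ∈ C

/-- The trivial cluster system: all singletons together with `X` itself. -/
def CtrivS (α : Type*) [Fintype α] [DecidableEq α] : Set (Finset α) :=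
  {A | (∃ x : α, A = {x}) ∨ A = Finset.univ}

/-- `C` is ample: for every arc `(C₂, C₁)` of the Hasse diagram (i.e. `C₂ ⊊ C₁`
with nothing of `C` strictly between), `C₁ - C₂ ∈ C`. -/
def IsAmpleS {α : Type*} [DecidableEq α] (C : Set (Finset α)) : Prop :=
  ∀ C₁ ∈ C, ∀ C₂ ∈ C, C₂ ⊂ C₁ → (∀ B ∈ C, ¬(C₂ ⊂ B ∧ B ⊂ C₁)) → C₁ \ C₂ ∈ C

section Aux
variable {α : Type*} [DecidableEq α]

lemma compat_iff (A B : Finset α) :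
    Compatible A B ↔ Disjoint A B ∨ A ⊆ B ∨ B ⊆ A := by
  unfold Compatible
  rw [← Finset.disjoint_iff_inter_eq_empty, Finset.inter_eq_left, Finset.inter_eq_right]

lemma compat_symm {A B : Finset α} (h : Compatible A B) : Compatible B A := by
  rw [compat_iff] at h ⊢
  rcases h with h | h | h
  exacts [Or.inl h.symm, Or.inr (Or.inr h), Or.inr (Or.inl h)]

lemma hierarchy_insert {C : Set (Finset α)} (hC : IsHierarchyS C) {A : Finset α}
    (hA : A.Nonempty) (h : ∀ B ∈ C, Compatible A B) : IsHierarchyS (insert A C) := by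
  constructor
  · intro B hB
    rcases hB with rfl | hB
    · exact hA
    · exact hC.1 B hB
  · intro P hP Q hQ
    rcases hP with rfl | hP <;> rcases hQ with rfl | hQ
    · exact Or.inr (Or.inl (Finset.inter_self _))
    · exact h Q hQ
    · exact compat_symm (h P hP)
    · exact hC.2 P hP Q hQ

lemma mem_of_max {C : Set (Finset α)} (hmax : IsMaxHierarchyS C) {A : Finset α}
    (hA : A.Nonempty) (h : ∀ B ∈ C, Compatible A B) : A ∈ C := by
  have := hmax.2 (insert A C) (hierarchy_insert hmax.1 hA h) (Set.subset_insert A C)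
  rw [← this]; exact Set.mem_insert A C

/-- split parts are disjoint -/
lemma split_disjoint {C : Set (Finset α)} (hC : IsHierarchyS C) {A C₁ C₂ : Finset α}
    (h1 : C₁ ∈ C) (h2 : C₂ ∈ C) (hs1 : C₁ ⊂ A) (hs2 : C₂ ⊂ A) (heq : A = C₁ ∪ C₂) :
    Disjoint C₁ C₂ := by
  have := (compat_iff C₁ C₂).mp (hC.2 C₁ h1 C₂ h2)
  rcases this with h | h | h
  · exact h
  · exfalso; rw [Finset.union_eq_right.mpr h] at heq; exact hs2.ne heq.symm
  · exfalso; rw [Finset.union_eq_left.mpr h] at heq; exact hs1.ne heq.symm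

/-- key induction for (b) → (a) -/
lemma key_induction {C : Set (Finset α)} (hC : IsHierarchyS C)
    (hsplit : ∀ A ∈ C, 1 < A.card →
      ∃ C₁ ∈ C, ∃ C₂ ∈ C, C₁ ⊂ A ∧ C₂ ⊂ A ∧ A = C₁ ∪ C₂) :
    ∀ n (B : Finset α), B.card ≤ n → B ∈ C → ∀ A : Finset α, A.Nonempty → A ⊆ B →
      (∀ P ∈ C, Compatible A P) → A ∈ C := by
  intro n
  induction n with
  | zero =>
    intro B hB hBC A hA hAB _
    have := hC.1 B hBC
    simp [Finset.card_eq_zero, Nat.le_zero] at hB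
    simp [hB] at this
  | succ n ih =>
    intro B hB hBC A hA hAB hcompat
    by_cases h1 : B.card ≤ 1
    · -- |B| = 1, so A = B
      have : A = B := Finset.eq_of_subset_of_card_le hAB (by
        have := Finset.card_pos.mpr hA; omega)
      rw [this]; exact hBC
    · obtain ⟨C₁, hC₁, C₂, hC₂, hs1, hs2, heq⟩ := hsplit B hBC (by omega)
      have hdisj := split_disjoint hC hC₁ hC₂ hs1 hs2 heq
      have hc1 := Finset.card_lt_card hs1
      have hc2 := Finset.card_lt_card hs2
      rcases (compat_iff A C₁).mp (hcompat C₁ hC₁) with h | h | h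
      · -- A disjoint from C₁, so A ⊆ C₂
        have hsub : A ⊆ C₂ := by
          intro x hx
          have := hAB hx
          rw [heq, Finset.mem_union] at this
          rcases this with hx1 | hx2
          · exact absurd hx1 (Finset.disjoint_left.mp h hx)
          · exact hx2
        exact ih C₂ (by omega) hC₂ A hA hsub hcompat
      · exact ih C₁ (by omega) hC₁ A hA h hcompat
      · rcases (compat_iff A C₂).mp (hcompat C₂ hC₂) with h2 | h2 | h2
        · -- A disjoint from C₂ and C₁ ⊆ A: A ⊆ C₁ so A = C₁
          have hsub : A ⊆ C₁ := by
            intro x hx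
            have := hAB hx
            rw [heq, Finset.mem_union] at this
            rcases this with hx1 | hx2
            · exact hx1
            · exact absurd hx2 (Finset.disjoint_left.mp h2 hx)
          have : A = C₁ := Finset.Subset.antisymm hsub h
          rw [this]; exact hC₁
        · -- C₁ ⊆ A ⊆ C₂ contradicts disjoint
          exfalso
          obtain ⟨x, hx⟩ := hC.1 C₁ hC₁
          exact Finset.disjoint_left.mp hdisj hx (h2 (h hx))
        · -- C₁ ⊆ A and C₂ ⊆ A: A = B
          have : A = B := Finset.Subset.antisymm hAB
            (by rw [heq]; exact Finset.union_subset h h2)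
          rw [this]; exact hBC

end Aux

theorem stmt3 {α : Type*} [Fintype α] [DecidableEq α] (hcard : 2 ≤ Fintype.card α)
    (C : Set (Finset α)) (hC : IsHierarchyS C) :
    [IsMaxHierarchyS C,
     Finset.univ ∈ C ∧ ∀ A ∈ C, 1 < A.card →
        ∃ C₁ ∈ C, ∃ C₂ ∈ C, C₁ ⊂ A ∧ C₂ ⊂ A ∧ A = C₁ ∪ C₂,
     Finset.univ ∈ C ∧ IsAmpleS C ∧ ∀ x : α, ({x} : Finset α) ∈ C].TFAE := by
  have hne : Nonempty α := Fintype.card_pos_iff.mp (by omega)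
  tfae_have 1 → 3 := by
    intro hmax
    have huniv : (Finset.univ : Finset α) ∈ C := by
      apply mem_of_max hmax Finset.univ_nonempty
      intro B hB
      exact Or.inr (Or.inr (Finset.univ_inter B))
    refine ⟨huniv, ?_, ?_⟩
    · -- ample
      intro C₁ hC₁ C₂ hC₂ hss hnb
      obtain ⟨x, hxC₁, hxC₂⟩ := Finset.exists_of_ssubset hss
      apply mem_of_max hmax ⟨x, Finset.mem_sdiff.mpr ⟨hxC₁, hxC₂⟩⟩
      intro B hB
      rw [compat_iff]
      rcases (compat_iff B C₁).mp (hC.2 B hB C₁ hC₁) with h | h | h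
      · exact Or.inl (h.symm.mono_left Finset.sdiff_subset)
      · -- B ⊆ C₁
        rcases (compat_iff B C₂).mp (hC.2 B hB C₂ hC₂) with h2 | h2 | h2
        · -- B disjoint C₂, B ⊆ C₁ : B ⊆ C₁ \ C₂
          refine Or.inr (Or.inr fun x hx => Finset.mem_sdiff.mpr
            ⟨h hx, Finset.disjoint_left.mp h2 hx⟩)
        · -- B ⊆ C₂ : disjoint
          exact Or.inl ((Finset.sdiff_disjoint).mono_right h2)
        · -- C₂ ⊆ B ⊆ C₁
          by_cases he2 : B = C₂
          · subst he2; exact Or.inl ((Finset.sdiff_disjoint).mono_right le_rfl)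
          by_cases he1 : B = C₁
          · subst he1; exact Or.inr (Or.inl Finset.sdiff_subset)
          exfalso
          exact hnb B hB ⟨lt_of_le_of_ne h2 (Ne.symm he2), lt_of_le_of_ne h he1⟩
      · exact Or.inr (Or.inl (Finset.sdiff_subset.trans h))
    · -- singletons
      intro x
      apply mem_of_max hmax (Finset.singleton_nonempty x)
      intro B hB
      by_cases hx : x ∈ B
      · exact Or.inr (Or.inl (by simp [Finset.singleton_inter_of_mem hx]))
      · exact Or.inl (Finset.singleton_inter_of_notMem hx)
  tfae_have 3 → 2 := by
    rintro ⟨huniv, hample, hsing⟩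
    refine ⟨huniv, ?_⟩
    intro A hA hcardA
    -- maximal proper subcluster
    set S : Set (Finset α) := {B | B ∈ C ∧ B ⊂ A} with hS
    have hSne : S.Nonempty := by
      obtain ⟨x, hx⟩ := Finset.card_pos.mp (by omega : 0 < A.card)
      refine ⟨{x}, hsing x, ?_⟩
      refine Finset.ssubset_iff_of_subset (Finset.singleton_subset_iff.mpr hx) |>.mpr ?_
      obtain ⟨y, hy, hyx⟩ := Finset.exists_mem_ne hcardA x
      exact ⟨y, hy, by simp [hyx]⟩
    obtain ⟨C₂, hC₂S, hmaxS⟩ : ∃ a ∈ S, ∀ b ∈ S, a.card ≤ b.card → a.card = b.card := by obtain ⟨a, ha, hb⟩ := Set.exists_max_image S Finset.card (Set.toFinite S) hSne; exact ⟨a, ha, fun b hb2 hle => le_antisymm hle (hb b hb2)⟩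
    have hnb : ∀ B ∈ C, ¬(C₂ ⊂ B ∧ B ⊂ A) := by
      rintro B hB ⟨h1, h2⟩
      have hBS : B ∈ S := ⟨hB, h2⟩
      have := hmaxS B hBS (le_of_lt (Finset.card_lt_card h1))
      exact absurd this (Nat.ne_of_lt (Finset.card_lt_card h1))
    have hsd := hample A hA C₂ hC₂S.1 hC₂S.2 hnb
    refine ⟨C₂, hC₂S.1, A \ C₂, hsd, hC₂S.2, ?_, ?_⟩
    · exact Finset.sdiff_ssubset hC₂S.2.subset (hC.1 C₂ hC₂S.1)
    · rw [Finset.union_sdiff_of_subset hC₂S.2.subset]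
  tfae_have 2 → 1 := by
    rintro ⟨huniv, hsplit⟩
    refine ⟨hC, fun D hD hsub => ?_⟩
    refine Set.Subset.antisymm (fun A hAD => ?_) hsub
    exact key_induction hC hsplit (Finset.univ.card) Finset.univ le_rfl huniv A
      (hD.1 A hAD) (Finset.subset_univ A) (fun P hP => hD.2 A hAD P (hsub hP))
  tfae_finish
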